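/- Let C be a category with all pullbacks and let f : Y ⟶ X be an effective descent morphism, i.e. the pullback functor Over.pullback f : Over X ⥤ Over Y is monadic. Then for any morphism g : Z ⟶ X, the pullback of f along g — that is, the second projection pullback f g ⟶ Z — is again an effective descent morphism. (This is the paper's assertion that effective descent morphisms are pullback stable, 'essentially because monadicity criteria are pullback stable'.) -/

import Mathlib

open CategoryTheory CategoryTheory.Limits

noncomputable section EffectiveDescentAux

namespace EffectiveDescentAux

universe w w' v u

variable {C : Type u} [Category.{v} C]

/-- Transport a split coequalizer along isomorphisms conjugating the parallel pair. -/
def isSplitCoequalizerOfIso {X Y X' Y' Z : C} {f g : X ⟶ Y} {π : Y ⟶ Z}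
    (q : IsSplitCoequalizer f g π) (i : X' ≅ X) (j : Y' ≅ Y) {f' g' : X' ⟶ Y'}
    (hf : f' ≫ j.hom = i.hom ≫ f) (hg : g' ≫ j.hom = i.hom ≫ g) :
    IsSplitCoequalizer f' g' (j.hom ≫ π) where
  rightSection := q.rightSection ≫ j.inv
  leftSection := j.hom ≫ q.leftSection ≫ i.inv
  condition := by
    rw [← Category.assoc, hf, ← Category.assoc, hg, Category.assoc, Category.assoc, q.condition]
  rightSection_π := by
    rw [Category.assoc, Iso.inv_hom_id_assoc, q.rightSection_π]
  leftSection_bottom := by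
    have hg' : i.inv ≫ g' ≫ j.hom = g := by rw [hg, Iso.inv_hom_id_assoc]
    calc (j.hom ≫ q.leftSection ≫ i.inv) ≫ g'
        = j.hom ≫ q.leftSection ≫ (i.inv ≫ g' ≫ j.hom) ≫ j.inv := by
          simp [Category.assoc]
      _ = j.hom ≫ q.leftSection ≫ g ≫ j.inv := by rw [hg']
      _ = 𝟙 Y' := by rw [q.leftSection_bottom_assoc, Iso.hom_inv_id]
  leftSection_top := by
    have hf' : i.inv ≫ f' ≫ j.hom = f := by rw [hf, Iso.inv_hom_id_assoc]
    calc (j.hom ≫ q.leftSection ≫ i.inv) ≫ f'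
        = j.hom ≫ q.leftSection ≫ (i.inv ≫ f' ≫ j.hom) ≫ j.inv := by
          simp [Category.assoc]
      _ = j.hom ≫ q.leftSection ≫ f ≫ j.inv := by rw [hf']
      _ = (j.hom ≫ π) ≫ q.rightSection ≫ j.inv := by
          rw [q.leftSection_top_assoc]; simp only [Category.assoc]

section OverMap

variable {Z X : C} (h : Z ⟶ X) {J : Type w} [Category.{w'} J] (K : J ⥤ Over Z)

/-- `Over.map h` reflects colimits (of any shape). -/
def isColimitOfMapCocone {e : Cocone K} (he : IsColimit ((Over.map h).mapCocone e)) :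
    IsColimit e := by
  refine
    { desc := fun s => Over.homMk (he.desc ((Over.map h).mapCocone s)).left ?_
      fac := fun s j => ?_
      uniq := fun s m hm => ?_ }
  · -- (he.desc _).left ≫ s.pt.hom = e.pt.hom
    let φ := he.desc ((Over.map h).mapCocone s)
    let ψ₁ : (Over.map h).obj e.pt ⟶ Over.mk h := Over.homMk e.pt.hom (by simp)
    let ψ₂ : (Over.map h).obj e.pt ⟶ Over.mk h :=
      Over.homMk (φ.left ≫ s.pt.hom) (by
        have := Over.w φ
        simp only [Functor.mapCocone_pt, Over.map_obj_hom, Over.mk_hom] at this ⊢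
        rw [Category.assoc, ← this])
    have hψ : ψ₂ = ψ₁ := by
      apply he.hom_ext
      intro j
      ext
      have hfac := congrArg CategoryTheory.CommaMorphism.left (he.fac ((Over.map h).mapCocone s) j)
      simp only [Functor.mapCocone_ι_app, Over.comp_left, Over.map_map_left] at hfac
      simp only [Functor.mapCocone_ι_app, Over.comp_left, Over.map_map_left,
        Over.homMk_left, ψ₁, ψ₂]
      rw [← Category.assoc, hfac]
      exact (Over.w (s.ι.app j)).trans (Over.w (e.ι.app j)).symm

    have := congrArg CategoryTheory.CommaMorphism.left hψ
    simpa [ψ₁, ψ₂] using this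
  · ext
    have hfac := congrArg CategoryTheory.CommaMorphism.left (he.fac ((Over.map h).mapCocone s) j)
    simpa using hfac
  · ext
    have huniq : (Over.map h).map m = he.desc ((Over.map h).mapCocone s) :=
      he.uniq ((Over.map h).mapCocone s) ((Over.map h).map m) (fun j => by
        simp only [Functor.mapCocone_ι_app, ← Functor.map_comp, hm j])
    have := congrArg CategoryTheory.CommaMorphism.left huniq
    simpa using this

/-- The tautological cocone on `K ⋙ Over.map h` with apex `Over.mk h`. -/
@[simps]
def tautCocone : Cocone (K ⋙ Over.map h) where
  pt := Over.mk h
  ι :=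
    { app := fun j => Over.homMk (K.obj j).hom (by simp)
      naturality := fun j j' m => by
        ext
        simpa using Over.w (K.map m) }

/-- A colimit cocone on `K ⋙ Over.map h` lifts to a cocone on `K`. -/
def liftMapCocone {d : Cocone (K ⋙ Over.map h)} (hd : IsColimit d) :
    LiftableCocone K (Over.map h) d := by
  let z : d.pt ⟶ Over.mk h := hd.desc (tautCocone h K)
  refine
    { liftedCocone :=
        { pt := Over.mk z.left
          ι :=
            { app := fun j => Over.homMk (d.ι.app j).left ?_
              naturality := fun j j' m => ?_ } }
      validLift := Cocones.ext (Over.isoMk (Iso.refl _) ?_) (fun j => ?_) }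
  · have hfac := congrArg Over.Hom.left (hd.fac (tautCocone h K) j)
    rw [Over.comp_left] at hfac
    exact hfac
  · ext
    have hnat := congrArg Over.Hom.left (d.ι.naturality m)
    rw [Over.comp_left, Over.comp_left] at hnat
    exact hnat
  · simpa using (Over.w z).symm
  · ext
    simp
    rfl

end OverMap

section BeckChevalley

variable [HasPullbacks C] {Y X Z : C} (f : Y ⟶ X) (g : Z ⟶ X)

/-- The Beck–Chevalley isomorphism for the pullback square of `f` and `g`. -/
def beckChevalley :
    Over.map g ⋙ Over.pullback f ≅
      Over.pullback (pullback.snd f g) ⋙ Over.map (pullback.fst f g) := by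
  refine NatIso.ofComponents (fun A => Over.isoMk ?_ ?_) ?_
  · exact
      { hom := pullback.lift (pullback.fst _ _)
          (pullback.lift (pullback.snd _ _) (pullback.fst _ _ ≫ A.hom)
            (by rw [← pullback.condition]; simp [pullback.lift_fst, pullback.lift_snd, pullback.lift_fst_assoc, pullback.lift_snd_assoc]))
          (by simp [pullback.lift_fst, pullback.lift_snd, pullback.lift_fst_assoc, pullback.lift_snd_assoc])
        inv := pullback.lift (pullback.fst _ _) (pullback.snd _ _ ≫ pullback.fst f g)
          (by simp only [Over.map_obj_hom]
              rw [pullback.condition_assoc, ← pullback.condition]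
              simp only [Category.assoc])
        hom_inv_id := by
          apply pullback.hom_ext <;> simp [pullback.lift_fst, pullback.lift_snd, pullback.lift_fst_assoc, pullback.lift_snd_assoc]
        inv_hom_id := by
          apply pullback.hom_ext
          · simp [pullback.lift_fst, pullback.lift_snd, pullback.lift_fst_assoc, pullback.lift_snd_assoc]
          · apply pullback.hom_ext <;> simp [pullback.condition, pullback.lift_fst, pullback.lift_snd, pullback.lift_fst_assoc, pullback.lift_snd_assoc] }
  · simp [pullback.lift_fst, pullback.lift_snd, pullback.lift_fst_assoc, pullback.lift_snd_assoc]
  · intro A B u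
    ext
    dsimp
    apply pullback.hom_ext
    · simp [pullback.lift_fst, pullback.lift_snd, pullback.lift_fst_assoc, pullback.lift_snd_assoc]
    · apply pullback.hom_ext <;> simp [pullback.lift_fst, pullback.lift_snd, pullback.lift_fst_assoc, pullback.lift_snd_assoc]

end BeckChevalley


section Main

variable [HasPullbacks C] {Y X Z : C} (f : Y ⟶ X) (g : Z ⟶ X)

/-- The key step: if `Over.pullback f` is monadic, then `Over.pullback (pullback.snd f g)`
creates coequalizers of split pairs. -/
def createsOne [MonadicRightAdjoint (Over.pullback f)] {P Q : Over Z} (a b : P ⟶ Q)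
    [(Over.pullback (pullback.snd f g)).IsSplitPair a b] :
    CreatesColimit (parallelPair a b) (Over.pullback (pullback.snd f g)) := by
  let G' := Over.pullback (pullback.snd f g)
  let V := Over.map (pullback.fst f g)
  let U := Over.map g
  let G := Over.pullback f
  let κ : U ⋙ G ≅ G' ⋙ V := beckChevalley f g
  haveI hPV : PreservesColimitsOfSize.{0, 0} V :=
    (Over.mapPullbackAdj (pullback.fst f g)).leftAdjoint_preservesColimits
  -- the pair `(U.map a, U.map b)` is `G`-split
  haveI hsp : G.IsSplitPair (U.map a) (U.map b) := by
    obtain ⟨Z₀, π, ⟨q⟩⟩ :=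
      HasSplitCoequalizer.splittable (f := G'.map a) (g := G'.map b)
    exact ⟨⟨_, _, ⟨isSplitCoequalizerOfIso (q.map V) (κ.app P) (κ.app Q)
      (κ.hom.naturality a) (κ.hom.naturality b)⟩⟩⟩
  haveI CC : CreatesColimit (parallelPair (U.map a) (U.map b)) G :=
    Monad.createsGSplitCoequalizersOfMonadic (G := G) (U.map a) (U.map b)
  haveI CKU : CreatesColimit (parallelPair a b ⋙ U) G := by
    have hiso : parallelPair (U.map a) (U.map b) ≅ parallelPair a b ⋙ U :=
      (diagramIsoParallelPair (parallelPair a b ⋙ U)).symm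
    exact createsColimitOfIsoDiagram G hiso
  haveI hRV : ReflectsColimit (parallelPair a b ⋙ G') V :=
    ⟨fun {e'} he' => ⟨isColimitOfMapCocone (pullback.fst f g) _ he'⟩⟩
  refine { reflects := fun {e} he => ?_, lifts := fun c hc => ?_ }
  · have h1 : IsColimit (V.mapCocone (G'.mapCocone e)) := isColimitOfPreserves V he
    have h2 : IsColimit (G.mapCocone (U.mapCocone e)) :=
      (IsColimit.mapCoconeEquiv κ.symm (c := e)) h1
    have h3 : IsColimit (U.mapCocone e) := isColimitOfReflects G h2
    exact ⟨isColimitOfMapCocone g _ h3⟩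
  · have hc2 : IsColimit (V.mapCocone c) := isColimitOfPreserves V hc
    let c3 : Cocone (parallelPair a b ⋙ (U ⋙ G)) :=
      (Cocone.precompose (Functor.isoWhiskerLeft (parallelPair a b) κ).hom).obj (V.mapCocone c)
    have hc3 : IsColimit c3 :=
      (IsColimit.precomposeHomEquiv (Functor.isoWhiskerLeft (parallelPair a b) κ)
        (V.mapCocone c)).symm hc2
    let d : Cocone (parallelPair a b ⋙ U) := liftColimit (K := parallelPair a b ⋙ U) (F := G) hc3
    have hd : IsColimit d := liftedColimitIsColimit (K := parallelPair a b ⋙ U) (F := G) hc3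
    have dmaps : G.mapCocone d ≅ c3 := liftedColimitMapsToOriginal (K := parallelPair a b ⋙ U) (F := G) hc3
    let L := liftMapCocone g (parallelPair a b) hd
    have h6 : IsColimit (G.mapCocone (U.mapCocone L.liftedCocone)) :=
      IsColimit.ofIsoColimit hc3
        (dmaps.symm ≪≫ ((Cocones.functoriality _ G).mapIso L.validLift).symm)
    have h7 : IsColimit (V.mapCocone (G'.mapCocone L.liftedCocone)) :=
      (IsColimit.mapCoconeEquiv κ (c := L.liftedCocone)) h6
    have h9 : IsColimit (G'.mapCocone L.liftedCocone) := isColimitOfReflects V h7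
    exact ⟨L.liftedCocone, IsColimit.uniqueUpToIso h9 hc⟩

end Main

end EffectiveDescentAux

end EffectiveDescentAux

/-- Effective descent morphisms are stable under pullback: if the pullback functor
along `f : Y ⟶ X` is monadic, then so is the pullback functor along the pullback
of `f` along any `g : Z ⟶ X`. -/
theorem effectiveDescent_pullback_stable
    {C : Type*} [Category C] [HasPullbacks C]
    {Y X Z : C} (f : Y ⟶ X) (g : Z ⟶ X)
    (hf : Nonempty (MonadicRightAdjoint (Over.pullback f))) :
    Nonempty (MonadicRightAdjoint (Over.pullback (pullback.snd f g))) := by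
  obtain ⟨hf⟩ := hf
  haveI := hf
  haveI : Monad.CreatesColimitOfIsSplitPair (Over.pullback (pullback.snd f g)) :=
    ⟨fun a b => EffectiveDescentAux.createsOne f g a b⟩
  exact ⟨Monad.monadicOfCreatesGSplitCoequalizers (Over.mapPullbackAdj (pullback.snd f g))⟩
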